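/- arXiv:1709.02223 — 3 statements merged into one kernel-verified Lean document; each statement's English description precedes it below -/
import Mathlib

section
/- Let d_1, …, d_n be real m×p matrices and Q_1, …, Q_n be symmetric positive definite m×m matrices. Define Ψ = Σ_k d_kᵀ d_k, Ξ = Σ_k d_kᵀ Q_k d_k, and N = Σ_k d_kᵀ Q_k⁻¹ d_k. Then for every ξ ∈ ℝ^p, (ξᵀ Ψ Ξ⁻¹ Ψ ξ) ≤ ξᵀ N ξ whenever Ξ is invertible; equivalently, the matrix N − Ψ Ξ⁻¹ Ψ is positive semidefinite. -/
open Matrix BigOperators Finset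

lemma sum_mulVec' {a b : ℕ} {ι : Type*} (s : Finset ι) (M : ι → Matrix (Fin a) (Fin b) ℝ)
    (v : Fin b → ℝ) : (∑ k ∈ s, M k) *ᵥ v = ∑ k ∈ s, M k *ᵥ v := by
  ext i
  simp only [Matrix.mulVec, dotProduct, Finset.sum_apply, Matrix.sum_apply,
    Finset.sum_mul]
  rw [Finset.sum_comm]

lemma dotProduct_sum' {a : ℕ} {ι : Type*} (s : Finset ι) (x : Fin a → ℝ)
    (f : ι → Fin a → ℝ) : x ⬝ᵥ (∑ k ∈ s, f k) = ∑ k ∈ s, x ⬝ᵥ f k := by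
  simp only [dotProduct, Finset.sum_apply, Finset.mul_sum]
  rw [Finset.sum_comm]

lemma quad_expand {m p : ℕ} (dk : Matrix (Fin m) (Fin p) ℝ) (A : Matrix (Fin m) (Fin m) ℝ)
    (x y : Fin p → ℝ) :
    x ⬝ᵥ (dkᵀ * A * dk) *ᵥ y = (dk *ᵥ x) ⬝ᵥ A *ᵥ (dk *ᵥ y) := by
  rw [← Matrix.mulVec_mulVec, ← Matrix.mulVec_mulVec, Matrix.dotProduct_mulVec,
    Matrix.vecMul_transpose]

lemma key_amgm {m : ℕ} (Q : Matrix (Fin m) (Fin m) ℝ) (hQ : Q.PosDef) (u v : Fin m → ℝ) :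
    2 * (u ⬝ᵥ v) ≤ u ⬝ᵥ Q *ᵥ u + v ⬝ᵥ Q⁻¹ *ᵥ v := by
  have hdet : IsUnit Q.det := isUnit_iff_ne_zero.2 hQ.det_pos.ne'
  have hQw : Q *ᵥ (Q⁻¹ *ᵥ v) = v := by
    rw [Matrix.mulVec_mulVec, Matrix.mul_nonsing_inv Q hdet, Matrix.one_mulVec]
  have hsym : Qᵀ = Q := hQ.isHermitian
  have h := hQ.posSemidef.dotProduct_mulVec_nonneg (u - Q⁻¹ *ᵥ v)
  simp only [star_trivial, RCLike.re_to_real] at h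
  have hexp : (u - Q⁻¹ *ᵥ v) ⬝ᵥ Q *ᵥ (u - Q⁻¹ *ᵥ v)
      = u ⬝ᵥ Q *ᵥ u - 2 * (u ⬝ᵥ v) + v ⬝ᵥ Q⁻¹ *ᵥ v := by
    rw [Matrix.mulVec_sub, sub_dotProduct, dotProduct_sub,
      dotProduct_sub, hQw]
    have h1 : (Q⁻¹ *ᵥ v) ⬝ᵥ Q *ᵥ u = v ⬝ᵥ u := by
      rw [Matrix.dotProduct_mulVec, ← Matrix.mulVec_transpose, hsym, hQw]
    have h2 : (Q⁻¹ *ᵥ v) ⬝ᵥ v = v ⬝ᵥ Q⁻¹ *ᵥ v := dotProduct_comm _ _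
    have h3 : u ⬝ᵥ v = v ⬝ᵥ u := dotProduct_comm _ _
    rw [h1, h2, h3]; ring
  rw [hexp] at h; linarith

/-- For matrices `d k : m × p` and symmetric positive definite `Q k : m × m`,
with `Ψ = Σ dᵀd`, `Ξ = Σ dᵀ Q d`, `N = Σ dᵀ Q⁻¹ d`, if `Ξ` is invertible then
`N − Ψ Ξ⁻¹ Ψ` is positive semidefinite. -/
theorem smce_vs_mce_key_ineq {n m p : ℕ}
    (d : Fin n → Matrix (Fin m) (Fin p) ℝ)
    (Q : Fin n → Matrix (Fin m) (Fin m) ℝ)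
    (hQ : ∀ k, (Q k).PosDef)
    (Ψ Ξ N : Matrix (Fin p) (Fin p) ℝ)
    (hΨ : Ψ = ∑ k, (d k)ᵀ * d k)
    (hΞ : Ξ = ∑ k, (d k)ᵀ * Q k * d k)
    (hN : N = ∑ k, (d k)ᵀ * (Q k)⁻¹ * d k)
    (hΞinv : IsUnit Ξ.det) :
    (N - Ψ * Ξ⁻¹ * Ψ).PosSemidef := by
  have hQsym : ∀ k, (Q k)ᵀ = Q k := fun k => (hQ k).isHermitian
  have hQinvsym : ∀ k, ((Q k)⁻¹)ᵀ = (Q k)⁻¹ := by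
    intro k
    rw [Matrix.transpose_nonsing_inv, hQsym]
  have hΨsym : Ψᵀ = Ψ := by
    rw [hΨ, Matrix.transpose_sum]
    refine Finset.sum_congr rfl fun k _ => ?_
    rw [Matrix.transpose_mul, Matrix.transpose_transpose]
  have hΞsym : Ξᵀ = Ξ := by
    rw [hΞ, Matrix.transpose_sum]
    refine Finset.sum_congr rfl fun k _ => ?_
    rw [Matrix.transpose_mul, Matrix.transpose_mul, Matrix.transpose_transpose, hQsym,
      Matrix.mul_assoc]
  have hNsym : Nᵀ = N := by
    rw [hN, Matrix.transpose_sum]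
    refine Finset.sum_congr rfl fun k _ => ?_
    rw [Matrix.transpose_mul, Matrix.transpose_mul, Matrix.transpose_transpose, hQinvsym,
      Matrix.mul_assoc]
  have hΞinvsym : (Ξ⁻¹)ᵀ = Ξ⁻¹ := by rw [Matrix.transpose_nonsing_inv, hΞsym]
  refine Matrix.posSemidef_iff_dotProduct_mulVec.mpr ⟨?_, ?_⟩
  · show (N - Ψ * Ξ⁻¹ * Ψ)ᴴ = _
    simp only [Matrix.conjTranspose_eq_transpose_of_trivial, Matrix.transpose_sub,
      Matrix.transpose_mul, hΨsym, hΞinvsym, hNsym]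
    rw [Matrix.mul_assoc]
  · intro ξ
    simp only [star_trivial, RCLike.re_to_real]
    set y : Fin p → ℝ := Ξ⁻¹ *ᵥ (Ψ *ᵥ ξ) with hy
    have hΞy : Ξ *ᵥ y = Ψ *ᵥ ξ := by
      rw [hy, Matrix.mulVec_mulVec, Matrix.mul_nonsing_inv Ξ hΞinv, Matrix.one_mulVec]
    have ha : ξ ⬝ᵥ (Ψ * Ξ⁻¹ * Ψ) *ᵥ ξ = ξ ⬝ᵥ Ψ *ᵥ y := by
      rw [← Matrix.mulVec_mulVec, ← Matrix.mulVec_mulVec]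
    have hab : ξ ⬝ᵥ Ψ *ᵥ y = y ⬝ᵥ Ξ *ᵥ y := by
      rw [Matrix.dotProduct_mulVec, ← Matrix.mulVec_transpose, hΨsym, ← hΞy,
        dotProduct_comm]
    -- per-k sums
    have hsum : 2 * (ξ ⬝ᵥ Ψ *ᵥ y) ≤ y ⬝ᵥ Ξ *ᵥ y + ξ ⬝ᵥ N *ᵥ ξ := by
      have hΨe : ξ ⬝ᵥ Ψ *ᵥ y = ∑ k, (d k *ᵥ y) ⬝ᵥ (d k *ᵥ ξ) := by
        rw [hΨ, sum_mulVec', dotProduct_sum' _ _ _]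
        refine Finset.sum_congr rfl fun k _ => ?_
        have := quad_expand (d k) 1 ξ y
        simpa [Matrix.one_mulVec, Matrix.mul_one, dotProduct_comm] using this
      have hΞe : y ⬝ᵥ Ξ *ᵥ y = ∑ k, (d k *ᵥ y) ⬝ᵥ (Q k) *ᵥ (d k *ᵥ y) := by
        rw [hΞ, sum_mulVec', dotProduct_sum' _ _ _]
        exact Finset.sum_congr rfl fun k _ => quad_expand (d k) (Q k) y y
      have hNe : ξ ⬝ᵥ N *ᵥ ξ = ∑ k, (d k *ᵥ ξ) ⬝ᵥ (Q k)⁻¹ *ᵥ (d k *ᵥ ξ) := by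
        rw [hN, sum_mulVec', dotProduct_sum' _ _ _]
        exact Finset.sum_congr rfl fun k _ => quad_expand (d k) (Q k)⁻¹ ξ ξ
      rw [hΨe, hΞe, hNe, Finset.mul_sum, ← Finset.sum_add_distrib]
      exact Finset.sum_le_sum fun k _ => key_amgm (Q k) (hQ k) (d k *ᵥ y) (d k *ᵥ ξ)
    have : ξ ⬝ᵥ (N - Ψ * Ξ⁻¹ * Ψ) *ᵥ ξ = ξ ⬝ᵥ N *ᵥ ξ - ξ ⬝ᵥ (Ψ * Ξ⁻¹ * Ψ) *ᵥ ξ := by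
      rw [Matrix.sub_mulVec, dotProduct_sub]
    rw [this, ha]
    linarith [hab, hsum]
end

section
/- Let Q_1, …, Q_n be symmetric m×m matrices satisfying c·Id ⪯ Q_k ⪯ C·Id for constants 0 < c ≤ C, and let d_1, …, d_n be m×k matrices with Ψ := Σ_k d_kᵀ d_k invertible. Define M := (Σ_k d_kᵀ Q_k⁻¹ d_k)⁻¹ and M̃ := Ψ⁻¹ (Σ_k d_kᵀ Q_k d_k) Ψ⁻¹. Then M̃ − M is positive semidefinite. -/
open Matrix BigOperators

private lemma sum_mulVec'_s12 {ι R : Type*} [Fintype ι] {m k : ℕ} [CommRing R]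
    (f : ι → Matrix (Fin m) (Fin k) R) (x : Fin k → R) :
    (∑ j, f j) *ᵥ x = ∑ j, f j *ᵥ x := by
  ext i
  simp only [Matrix.mulVec, dotProduct, Matrix.sum_apply, Finset.sum_apply, Finset.sum_mul]
  exact Finset.sum_comm

private lemma dotProduct_sum'_s12 {ι R : Type*} [Fintype ι] {m : ℕ} [CommRing R]
    (x : Fin m → R) (v : ι → Fin m → R) :
    x ⬝ᵥ (∑ j, v j) = ∑ j, x ⬝ᵥ v j := by
  simp only [dotProduct, Finset.sum_apply, Finset.mul_sum]
  exact Finset.sum_comm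

private lemma posSemidef_sum {ι : Type*} [Fintype ι] {m : ℕ}
    (f : ι → Matrix (Fin m) (Fin m) ℝ) (hf : ∀ j, (f j).PosSemidef) :
    (∑ j, f j).PosSemidef := by
  classical
  refine Finset.sum_induction f _ (fun a b ha hb => ha.add hb) ?_ (fun j _ => hf j)
  simpa using (Matrix.PosSemidef.zero (n := Fin m) (R := ℝ))

/-- Covariance comparison between the SMCE and the MCE: with
`c·Id ⪯ Q k ⪯ C·Id`, `Ψ = Σ d kᵀ d k` invertible, `M = (Σ d kᵀ Q k⁻¹ d k)⁻¹` and
`M̃ = Ψ⁻¹ (Σ d kᵀ Q k d k) Ψ⁻¹`, the matrix `M̃ − M` is positive semidefinite. -/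
theorem smce_covariance_ge_mce {n m k : ℕ} (c C : ℝ) (hc : 0 < c) (hcC : c ≤ C)
    (Q : Fin n → Matrix (Fin m) (Fin m) ℝ)
    (hQsymm : ∀ j, (Q j).IsSymm)
    (hQlb : ∀ j, (Q j - c • (1 : Matrix (Fin m) (Fin m) ℝ)).PosSemidef)
    (hQub : ∀ j, (C • (1 : Matrix (Fin m) (Fin m) ℝ) - Q j).PosSemidef)
    (d : Fin n → Matrix (Fin m) (Fin k) ℝ)
    (hΨ : IsUnit (∑ j, (d j)ᵀ * d j).det) :
    ((∑ j, (d j)ᵀ * d j)⁻¹ * (∑ j, (d j)ᵀ * Q j * d j) * (∑ j, (d j)ᵀ * d j)⁻¹ -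
      (∑ j, (d j)ᵀ * (Q j)⁻¹ * d j)⁻¹).PosSemidef := by
  classical
  set Ψ : Matrix (Fin k) (Fin k) ℝ := ∑ j, (d j)ᵀ * d j with hΨdef
  set A : Matrix (Fin k) (Fin k) ℝ := ∑ j, (d j)ᵀ * (Q j)⁻¹ * d j with hAdef
  set B : Matrix (Fin k) (Fin k) ℝ := ∑ j, (d j)ᵀ * Q j * d j with hBdef
  -- c • 1 is positive definite
  have hc1 : (c • (1 : Matrix (Fin m) (Fin m) ℝ)).PosDef := by
    refine Matrix.PosDef.of_dotProduct_mulVec_pos ?_ (fun x hx => ?_)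
    · simp [Matrix.IsHermitian, Matrix.conjTranspose_eq_transpose_of_trivial]
    · have : (c • (1 : Matrix (Fin m) (Fin m) ℝ)) *ᵥ x = c • x := by
        simp [Matrix.smul_mulVec]
      rw [this]
      have hxx : 0 < star x ⬝ᵥ x := by
        simpa using dotProduct_star_self_pos_iff.mpr hx
      have : star x ⬝ᵥ (c • x) = c * (star x ⬝ᵥ x) := by
        simp [dotProduct_smul, smul_eq_mul]
      rw [this]
      positivity
  -- each Q j is positive definite
  have hQpd : ∀ j, (Q j).PosDef := by
    intro j
    have := hc1.add_posSemidef (hQlb j)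
    simpa [add_sub_cancel] using this
  have hQdet : ∀ j, IsUnit (Q j).det := fun j => (hQpd j).det_pos.ne'.isUnit
  have hQinvT : ∀ j, ((Q j)⁻¹)ᵀ = (Q j)⁻¹ := by
    intro j
    rw [Matrix.transpose_nonsing_inv, (hQsymm j)]
  -- Ψ is symmetric
  have hΨT : Ψᵀ = Ψ := by
    simp [hΨdef, Matrix.transpose_sum, Matrix.transpose_mul]
  -- A is symmetric
  have hAT : Aᵀ = A := by
    simp only [hAdef, Matrix.transpose_sum, Matrix.transpose_mul, Matrix.transpose_transpose]
    refine Finset.sum_congr rfl fun j _ => ?_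
    rw [← Matrix.mul_assoc, hQinvT j]
  -- A is positive definite
  have hApd : A.PosDef := by
    refine Matrix.PosDef.of_dotProduct_mulVec_pos ?_ (fun x hx => ?_)
    · rw [Matrix.IsHermitian, Matrix.conjTranspose_eq_transpose_of_trivial, hAT]
    · have hexp : star x ⬝ᵥ A *ᵥ x = ∑ j, (d j *ᵥ x) ⬝ᵥ (Q j)⁻¹ *ᵥ (d j *ᵥ x) := by
        rw [hAdef, sum_mulVec'_s12, dotProduct_sum'_s12]
        refine Finset.sum_congr rfl fun j _ => ?_
        rw [show ((d j)ᵀ * (Q j)⁻¹ * d j) *ᵥ x = (d j)ᵀ *ᵥ ((Q j)⁻¹ *ᵥ (d j *ᵥ x)) by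
          simp [Matrix.mulVec_mulVec, Matrix.mul_assoc]]
        rw [Matrix.dotProduct_mulVec, show star x = x from rfl, Matrix.vecMul_transpose]
      rw [hexp]
      -- there exists j with d j *ᵥ x ≠ 0
      have hex : ∃ j : Fin n, d j *ᵥ x ≠ 0 := by
        by_contra h
        push_neg at h
        have hΨx : Ψ *ᵥ x = 0 := by
          rw [hΨdef, sum_mulVec'_s12]
          refine Finset.sum_eq_zero fun j _ => ?_
          rw [show ((d j)ᵀ * d j) *ᵥ x = (d j)ᵀ *ᵥ (d j *ᵥ x) by
            simp [Matrix.mulVec_mulVec]]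
          rw [h j]
          simp
        have hinj : Function.Injective (Ψ.mulVec) :=
          Matrix.mulVec_injective_iff_isUnit.mpr ((Matrix.isUnit_iff_isUnit_det Ψ).2 hΨ)
        exact hx (hinj (by simpa using hΨx))
      obtain ⟨j₀, hj₀⟩ := hex
      have hQinvpd : ∀ j, ((Q j)⁻¹).PosDef := fun j => (hQpd j).inv
      refine Finset.sum_pos' (fun j _ => ?_) ⟨j₀, Finset.mem_univ _, ?_⟩
      · have := (hQinvpd j).posSemidef.dotProduct_mulVec_nonneg (d j *ᵥ x)
        simpa using this
      · have := (hQinvpd j₀).dotProduct_mulVec_pos hj₀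
        simpa using this
  have hAdet : IsUnit A.det := hApd.det_pos.ne'.isUnit
  have hAinvT : (A⁻¹)ᵀ = A⁻¹ := by rw [Matrix.transpose_nonsing_inv, hAT]
  -- the key sum-of-squares identity
  have key : ∑ j, (d j - (Q j)⁻¹ * (d j * (A⁻¹ * Ψ)))ᵀ * Q j * (d j - (Q j)⁻¹ * (d j * (A⁻¹ * Ψ)))
      = B - Ψ * A⁻¹ * Ψ := by
    have per : ∀ j, (d j - (Q j)⁻¹ * (d j * (A⁻¹ * Ψ)))ᵀ * Q j * (d j - (Q j)⁻¹ * (d j * (A⁻¹ * Ψ)))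
        = (d j)ᵀ * Q j * d j - ((d j)ᵀ * d j) * (A⁻¹ * Ψ) - (Ψ * A⁻¹) * ((d j)ᵀ * d j)
          + (Ψ * A⁻¹) * (((d j)ᵀ * (Q j)⁻¹ * d j) * (A⁻¹ * Ψ)) := by
      intro j
      have cancel1 : ∀ (X : Matrix (Fin m) (Fin k) ℝ), Q j * ((Q j)⁻¹ * X) = X :=
        fun X => Matrix.mul_nonsing_inv_cancel_left _ _ (hQdet j)
      have cancel2 : ∀ (X : Matrix (Fin m) (Fin k) ℝ), (Q j)⁻¹ * (Q j * X) = X :=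
        fun X => Matrix.nonsing_inv_mul_cancel_left _ _ (hQdet j)
      simp only [Matrix.transpose_sub, Matrix.transpose_mul, hQinvT j, hΨT, hAinvT,
        Matrix.sub_mul, Matrix.mul_sub, Matrix.mul_assoc, cancel1, cancel2]
      abel
    rw [Finset.sum_congr rfl fun j _ => per j]
    rw [Finset.sum_add_distrib, Finset.sum_sub_distrib, Finset.sum_sub_distrib,
      ← Finset.sum_mul, ← Finset.mul_sum, ← hBdef, ← hΨdef]
    have hsum3 : ∑ j, ((d j)ᵀ * (Q j)⁻¹ * d j) * (A⁻¹ * Ψ) = A * (A⁻¹ * Ψ) := by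
      rw [← Finset.sum_mul, ← hAdef]
    rw [← Finset.mul_sum, hsum3, Matrix.mul_nonsing_inv_cancel_left _ _ hAdet,
      show Ψ * (A⁻¹ * Ψ) = Ψ * A⁻¹ * Ψ from (Matrix.mul_assoc _ _ _).symm]
    abel
  -- the sum of squares is PSD
  have hS : (B - Ψ * A⁻¹ * Ψ).PosSemidef := by
    rw [← key]
    refine _root_.posSemidef_sum _ fun j => ?_
    have := (hQpd j).posSemidef.conjTranspose_mul_mul_same (d j - (Q j)⁻¹ * (d j * (A⁻¹ * Ψ)))
    simpa [Matrix.conjTranspose_eq_transpose_of_trivial] using this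
  -- conjugate by Ψ⁻¹
  have hΨinvT : (Ψ⁻¹)ᵀ = Ψ⁻¹ := by rw [Matrix.transpose_nonsing_inv, hΨT]
  have hfinal : (Ψ⁻¹ * (B - Ψ * A⁻¹ * Ψ) * Ψ⁻¹).PosSemidef := by
    have := hS.conjTranspose_mul_mul_same (Ψ⁻¹)
    simpa [Matrix.conjTranspose_eq_transpose_of_trivial, hΨinvT] using this
  have heq : Ψ⁻¹ * (B - Ψ * A⁻¹ * Ψ) * Ψ⁻¹ = Ψ⁻¹ * B * Ψ⁻¹ - A⁻¹ := by
    rw [Matrix.mul_sub, Matrix.sub_mul]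
    congr 1
    rw [show Ψ * A⁻¹ * Ψ = Ψ * (A⁻¹ * Ψ) from Matrix.mul_assoc _ _ _,
      Matrix.nonsing_inv_mul_cancel_left _ _ hΨ,
      Matrix.mul_nonsing_inv_cancel_right _ _ hΨ]
  rw [← heq] at *
  exact hfinal
end

section
/- Let q : [0,T] → ℝ^{m×m} be continuous with each q(t) symmetric positive definite, and let g : [0,T] → ℝ^{m×k} be continuous. Define Ψ̌ := ∫_0^T g(s)ᵀ g(s) ds, Ξ̌ := ∫_0^T g(s)ᵀ q(s) g(s) ds, and Ň := ∫_0^T g(s)ᵀ q(s)⁻¹ g(s) ds. If Ψ̌ is invertible, then Ň − Ψ̌ Ξ̌⁻¹ Ψ̌ is positive semidefinite. -/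
open Matrix Set intervalIntegral

attribute [local instance] Matrix.frobeniusNormedAddCommGroup Matrix.frobeniusNormedSpace

noncomputable instance matrixENormedAddMonoid {m n : ℕ} : ENormedAddMonoid (Matrix (Fin m) (Fin n) ℝ) :=
  @NormedAddGroup.toENormedAddMonoid _ Matrix.frobeniusNormedAddCommGroup.toNormedAddGroup

section Helpers

open MeasureTheory

noncomputable def quadCLM {k l : ℕ} (x : Fin k → ℝ) (y : Fin l → ℝ) :
    Matrix (Fin k) (Fin l) ℝ →L[ℝ] ℝ :=
  LinearMap.toContinuousLinearMap
    { toFun := fun M => x ⬝ᵥ M *ᵥ y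
      map_add' := fun A B => by simp [Matrix.add_mulVec, dotProduct_add]
      map_smul' := fun c A => by simp [Matrix.smul_mulVec, dotProduct_smul] }

@[simp] lemma quadCLM_apply {k l : ℕ} (x : Fin k → ℝ) (y : Fin l → ℝ)
    (M : Matrix (Fin k) (Fin l) ℝ) : quadCLM x y M = x ⬝ᵥ M *ᵥ y := rfl

lemma quad_intervalIntegral {k l : ℕ} {a b : ℝ} (x : Fin k → ℝ) (y : Fin l → ℝ)
    (f : ℝ → Matrix (Fin k) (Fin l) ℝ) (hf : IntervalIntegrable f volume a b) :
    x ⬝ᵥ (∫ s in a..b, f s) *ᵥ y = ∫ s in a..b, x ⬝ᵥ (f s) *ᵥ y :=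
  ((quadCLM x y).intervalIntegral_comp_comm hf).symm

noncomputable def transCLM (k l : ℕ) :
    Matrix (Fin k) (Fin l) ℝ →L[ℝ] Matrix (Fin l) (Fin k) ℝ :=
  LinearMap.toContinuousLinearMap
    { toFun := fun M => Mᵀ
      map_add' := fun A B => Matrix.transpose_add A B
      map_smul' := fun c A => Matrix.transpose_smul c A }

lemma transpose_intervalIntegral {k l : ℕ} {a b : ℝ}
    (f : ℝ → Matrix (Fin k) (Fin l) ℝ) (hf : IntervalIntegrable f volume a b) :
    (∫ s in a..b, f s)ᵀ = ∫ s in a..b, (f s)ᵀ :=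
  ((transCLM k l).intervalIntegral_comp_comm hf).symm

lemma quad_form_eq {m k : ℕ} (G : Matrix (Fin m) (Fin k) ℝ) (Q : Matrix (Fin m) (Fin m) ℝ)
    (x y : Fin k → ℝ) :
    x ⬝ᵥ (Gᵀ * Q * G) *ᵥ y = (G *ᵥ x) ⬝ᵥ Q *ᵥ (G *ᵥ y) := by
  rw [← Matrix.mulVec_mulVec, ← Matrix.mulVec_mulVec, Matrix.dotProduct_mulVec,
    Matrix.vecMul_transpose]

lemma quad_form_eq' {m k : ℕ} (G : Matrix (Fin m) (Fin k) ℝ) (x y : Fin k → ℝ) :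
    x ⬝ᵥ (Gᵀ * G) *ᵥ y = (G *ᵥ x) ⬝ᵥ (G *ᵥ y) := by
  rw [← Matrix.mulVec_mulVec, Matrix.dotProduct_mulVec, Matrix.vecMul_transpose]

lemma key_ineq {m : ℕ} {Q : Matrix (Fin m) (Fin m) ℝ} (hQ : Q.PosDef) (u v : Fin m → ℝ) :
    0 ≤ u ⬝ᵥ Q⁻¹ *ᵥ u - 2 * (v ⬝ᵥ u) + v ⬝ᵥ Q *ᵥ v := by
  have hdet : IsUnit Q.det := isUnit_iff_ne_zero.mpr hQ.det_pos.ne'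
  have hsym : Qᵀ = Q := by
    rw [← Matrix.conjTranspose_eq_transpose_of_trivial]; exact hQ.isHermitian
  have h0 := hQ.posSemidef.inv.dotProduct_mulVec_nonneg (u - Q *ᵥ v)
  rw [star_trivial] at h0
  have e1 : Q⁻¹ *ᵥ (u - Q *ᵥ v) = Q⁻¹ *ᵥ u - v := by
    rw [Matrix.mulVec_sub, Matrix.mulVec_mulVec, Matrix.nonsing_inv_mul Q hdet,
      Matrix.one_mulVec]
  have e2 : (Q *ᵥ v) ⬝ᵥ (Q⁻¹ *ᵥ u) = v ⬝ᵥ u :=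
    calc (Q *ᵥ v) ⬝ᵥ (Q⁻¹ *ᵥ u) = (v ᵥ* Qᵀ) ⬝ᵥ (Q⁻¹ *ᵥ u) := by
          rw [Matrix.vecMul_transpose]
      _ = v ⬝ᵥ Qᵀ *ᵥ (Q⁻¹ *ᵥ u) := (Matrix.dotProduct_mulVec v Qᵀ _).symm
      _ = v ⬝ᵥ u := by
          rw [hsym, Matrix.mulVec_mulVec, Matrix.mul_nonsing_inv Q hdet, Matrix.one_mulVec]
  have e3 : (Q *ᵥ v) ⬝ᵥ v = v ⬝ᵥ Q *ᵥ v := dotProduct_comm _ _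
  rw [e1, sub_dotProduct, dotProduct_sub, dotProduct_sub, e2, e3, dotProduct_comm u v] at h0
  linarith

lemma dotProduct_self_nonneg' {m : ℕ} (v : Fin m → ℝ) : 0 ≤ v ⬝ᵥ v :=
  Finset.sum_nonneg fun i _ => mul_self_nonneg _

end Helpers

open MeasureTheory

/-- Continuum analogue of the SMCE/MCE covariance comparison: with
`Ψ̌ = ∫ gᵀ g`, `Ξ̌ = ∫ gᵀ q g`, `Ň = ∫ gᵀ q⁻¹ g` over `[0,T]`, if `Ψ̌` is invertible then
`Ň − Ψ̌ Ξ̌⁻¹ Ψ̌` is positive semidefinite. -/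
theorem continuum_covariance_comparison {m k : ℕ} (T : ℝ) (hT : 0 ≤ T)
    (q : ℝ → Matrix (Fin m) (Fin m) ℝ)
    (hqcont : ContinuousOn q (Icc 0 T))
    (hqpos : ∀ s ∈ Icc 0 T, (q s).PosDef)
    (g : ℝ → Matrix (Fin m) (Fin k) ℝ)
    (hgcont : ContinuousOn g (Icc 0 T))
    (Ψ Ξ N : Matrix (Fin k) (Fin k) ℝ)
    (hΨ : Ψ = ∫ s in (0:ℝ)..T, (g s)ᵀ * g s)
    (hΞ : Ξ = ∫ s in (0:ℝ)..T, (g s)ᵀ * q s * g s)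
    (hN : N = ∫ s in (0:ℝ)..T, (g s)ᵀ * (q s)⁻¹ * g s)
    (hΨinv : IsUnit Ψ.det) :
    (N - Ψ * Ξ⁻¹ * Ψ).PosSemidef := by
  have huIcc : uIcc (0:ℝ) T = Icc 0 T := uIcc_of_le hT
  -- symmetry of q on Icc
  have hqsym : ∀ s ∈ Icc 0 T, (q s)ᵀ = q s := fun s hs => by
    rw [← Matrix.conjTranspose_eq_transpose_of_trivial]; exact (hqpos s hs).isHermitian
  have hqdet : ∀ s ∈ Icc 0 T, (q s).det ≠ 0 := fun s hs => (hqpos s hs).det_pos.ne'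
  -- continuity of q⁻¹ on Icc
  have hqinvcont : ContinuousOn (fun s => (q s)⁻¹) (Icc 0 T) := by
    have h1 : ContinuousOn (fun s => ((q s).det)⁻¹ • (q s).adjugate) (Icc 0 T) :=
      (((continuous_id.matrix_det).comp_continuousOn hqcont).inv₀ hqdet).smul
        ((continuous_id.matrix_adjugate).comp_continuousOn hqcont)
    have h2 : ∀ s, (q s)⁻¹ = ((q s).det)⁻¹ • (q s).adjugate := fun s => by
      rw [Matrix.inv_def, Ring.inverse_eq_inv']
    simpa only [h2] using h1
  -- continuity of the three matrix integrands
  have hFq : Continuous fun p : Matrix (Fin m) (Fin k) ℝ × Matrix (Fin m) (Fin m) ℝ =>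
      p.1ᵀ * p.2 * p.1 :=
    (continuous_fst.matrix_transpose.matrix_mul continuous_snd).matrix_mul continuous_fst
  have hGG : ContinuousOn (fun s => (g s)ᵀ * g s) (Icc 0 T) := by
    have hF : Continuous fun p : Matrix (Fin m) (Fin k) ℝ × Matrix (Fin m) (Fin k) ℝ =>
        p.1ᵀ * p.2 :=
      continuous_fst.matrix_transpose.matrix_mul continuous_snd
    have h := hF.comp_continuousOn (hgcont.prodMk hgcont)
    simpa only [Function.comp_def] using h
  have hGQG : ContinuousOn (fun s => (g s)ᵀ * q s * g s) (Icc 0 T) := by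
    have h := hFq.comp_continuousOn (hgcont.prodMk hqcont)
    simpa only [Function.comp_def] using h
  have hGQiG : ContinuousOn (fun s => (g s)ᵀ * (q s)⁻¹ * g s) (Icc 0 T) := by
    have h := hFq.comp_continuousOn (hgcont.prodMk hqinvcont)
    simpa only [Function.comp_def] using h
  -- interval integrability
  have iGG : IntervalIntegrable (fun s => (g s)ᵀ * g s) volume 0 T := by
    apply ContinuousOn.intervalIntegrable; rwa [huIcc]
  have iGQG : IntervalIntegrable (fun s => (g s)ᵀ * q s * g s) volume 0 T := by
    apply ContinuousOn.intervalIntegrable; rwa [huIcc]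
  have iGQiG : IntervalIntegrable (fun s => (g s)ᵀ * (q s)⁻¹ * g s) volume 0 T := by
    apply ContinuousOn.intervalIntegrable; rwa [huIcc]
  -- scalar interval integrability
  have iScal : ∀ (x y : Fin k → ℝ) (f : ℝ → Matrix (Fin k) (Fin k) ℝ),
      ContinuousOn f (Icc 0 T) →
      IntervalIntegrable (fun s => x ⬝ᵥ (f s) *ᵥ y) volume 0 T := by
    intro x y f hf
    have h := (quadCLM x y).continuous.comp_continuousOn hf
    simp only [Function.comp_def, quadCLM_apply] at h
    apply ContinuousOn.intervalIntegrable; rwa [huIcc]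
  -- symmetry of Ψ, Ξ, N
  have hΨsym : Ψᵀ = Ψ := by
    rw [hΨ, transpose_intervalIntegral _ iGG]
    refine intervalIntegral.integral_congr fun s hs => ?_
    rw [Matrix.transpose_mul, Matrix.transpose_transpose]
  have hΞsym : Ξᵀ = Ξ := by
    rw [hΞ, transpose_intervalIntegral _ iGQG]
    refine intervalIntegral.integral_congr fun s hs => ?_
    rw [huIcc] at hs
    rw [Matrix.transpose_mul, Matrix.transpose_mul, Matrix.transpose_transpose,
      hqsym s hs, Matrix.mul_assoc]
  have hNsym : Nᵀ = N := by
    rw [hN, transpose_intervalIntegral _ iGQiG]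
    refine intervalIntegral.integral_congr fun s hs => ?_
    rw [huIcc] at hs
    rw [Matrix.transpose_mul, Matrix.transpose_mul, Matrix.transpose_transpose,
      Matrix.transpose_nonsing_inv, hqsym s hs, Matrix.mul_assoc]
  have herm : ∀ {M : Matrix (Fin k) (Fin k) ℝ}, Mᵀ = M → M.IsHermitian := fun {M} h =>
    (Matrix.conjTranspose_eq_transpose_of_trivial M).trans h
  -- Ψ is positive semidefinite
  have hΨpsd : Ψ.PosSemidef := by
    refine PosSemidef.of_dotProduct_mulVec_nonneg (herm hΨsym) fun x => ?_
    rw [star_trivial, hΨ, quad_intervalIntegral x x _ iGG]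
    refine intervalIntegral.integral_nonneg hT fun s hs => ?_
    rw [quad_form_eq']
    exact dotProduct_self_nonneg' _
  -- Ξ is positive semidefinite
  have hΞpsd : Ξ.PosSemidef := by
    refine PosSemidef.of_dotProduct_mulVec_nonneg (herm hΞsym) fun x => ?_
    rw [star_trivial, hΞ, quad_intervalIntegral x x _ iGQG]
    refine intervalIntegral.integral_nonneg hT fun s hs => ?_
    rw [quad_form_eq]
    have := (hqpos s hs).posSemidef.dotProduct_mulVec_nonneg (g s *ᵥ x)
    rwa [star_trivial] at this
  -- Ξ is positive definite
  have hΞpd : Ξ.PosDef := by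
    refine PosDef.of_dotProduct_mulVec_pos (herm hΞsym) fun x hx => ?_
    rcases (hΞpsd.dotProduct_mulVec_nonneg x).lt_or_eq with h | h
    · exact h
    exfalso
    -- the quadratic form of Ξ at x vanishes
    have hint : IntervalIntegrable (fun s => x ⬝ᵥ ((g s)ᵀ * q s * g s) *ᵥ x) volume 0 T :=
      iScal x x _ hGQG
    have hzero : ∫ s in (0:ℝ)..T, x ⬝ᵥ ((g s)ᵀ * q s * g s) *ᵥ x = 0 := by
      rw [← quad_intervalIntegral x x _ iGQG, ← hΞ]
      rw [star_trivial] at h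
      exact h.symm
    have hnonneg : 0 ≤ᵐ[volume.restrict (Ioc 0 T)]
        fun s => x ⬝ᵥ ((g s)ᵀ * q s * g s) *ᵥ x := by
      filter_upwards [ae_restrict_mem measurableSet_Ioc] with s hs
      have hs' : s ∈ Icc 0 T := Ioc_subset_Icc_self hs
      rw [quad_form_eq]
      have := (hqpos s hs').posSemidef.dotProduct_mulVec_nonneg (g s *ᵥ x)
      rwa [star_trivial] at this
    have hae := (intervalIntegral.integral_eq_zero_iff_of_le_of_nonneg_ae hT hnonneg
      hint).mp hzero
    -- hence g s *ᵥ x = 0 a.e.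
    have hae2 : (fun s => (g s *ᵥ x) ⬝ᵥ (g s *ᵥ x)) =ᵐ[volume.restrict (Ioc 0 T)] 0 := by
      filter_upwards [hae, ae_restrict_mem measurableSet_Ioc] with s h1 h2
      have hs' : s ∈ Icc 0 T := Ioc_subset_Icc_self h2
      have hgx : g s *ᵥ x = 0 := by
        by_contra hne
        have hpos := (hqpos s hs').dotProduct_mulVec_pos hne
        rw [star_trivial] at hpos
        rw [quad_form_eq] at h1
        simp only [Pi.zero_apply] at h1
        linarith
      simp [hgx]
    -- hence the quadratic form of Ψ at x vanishes
    have hΨ0 : x ⬝ᵥ Ψ *ᵥ x = 0 := by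
      rw [hΨ, quad_intervalIntegral x x _ iGG, intervalIntegral.integral_of_le hT]
      have : (fun s => x ⬝ᵥ ((g s)ᵀ * g s) *ᵥ x) =ᵐ[volume.restrict (Ioc 0 T)] 0 := by
        filter_upwards [hae2] with s h1
        rw [quad_form_eq']
        simpa using h1
      rw [MeasureTheory.integral_congr_ae this]
      simp
    have hΨx : Ψ *ᵥ x = 0 := by
      have := (hΨpsd.dotProduct_mulVec_zero_iff x).mp (by rwa [star_trivial])
      exact this
    have : x = 0 := by
      have h := congrArg (fun v => Ψ⁻¹ *ᵥ v) hΨx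
      simpa [Matrix.mulVec_mulVec, Matrix.nonsing_inv_mul Ψ hΨinv, Matrix.one_mulVec,
        Matrix.mulVec_zero] using h
    exact hx this
  have hΞdet : IsUnit Ξ.det := isUnit_iff_ne_zero.mpr hΞpd.det_pos.ne'
  have hΞinvsym : (Ξ⁻¹)ᵀ = Ξ⁻¹ := by rw [Matrix.transpose_nonsing_inv, hΞsym]
  -- conclusion
  refine PosSemidef.of_dotProduct_mulVec_nonneg ?_ ?_
  · refine herm ?_
    rw [Matrix.transpose_sub, hNsym, Matrix.transpose_mul, Matrix.transpose_mul, hΨsym,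
      hΞinvsym, Matrix.mul_assoc]
  intro x
  rw [star_trivial]
  obtain ⟨y, hy⟩ : ∃ y, y = Ξ⁻¹ *ᵥ (Ψ *ᵥ x) := ⟨_, rfl⟩
  have hc : x ⬝ᵥ (Ψ * Ξ⁻¹ * Ψ) *ᵥ x = y ⬝ᵥ (Ψ *ᵥ x) := by
    rw [← Matrix.mulVec_mulVec, ← Matrix.mulVec_mulVec, Matrix.dotProduct_mulVec]
    have hxΨ : x ᵥ* Ψ = Ψ *ᵥ x := by
      conv_lhs => rw [← hΨsym]
      rw [Matrix.vecMul_transpose]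
    rw [hxΨ, ← hy, dotProduct_comm]
  -- the three scalar integrands
  have iF1 : IntervalIntegrable (fun s => x ⬝ᵥ ((g s)ᵀ * (q s)⁻¹ * g s) *ᵥ x) volume 0 T :=
    iScal x x _ hGQiG
  have iF2 : IntervalIntegrable (fun s => y ⬝ᵥ ((g s)ᵀ * g s) *ᵥ x) volume 0 T :=
    iScal y x _ hGG
  have iF3 : IntervalIntegrable (fun s => y ⬝ᵥ ((g s)ᵀ * q s * g s) *ᵥ y) volume 0 T :=
    iScal y y _ hGQG
  have hJ : 0 ≤ ∫ s in (0:ℝ)..T,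
      (x ⬝ᵥ ((g s)ᵀ * (q s)⁻¹ * g s) *ᵥ x - 2 * (y ⬝ᵥ ((g s)ᵀ * g s) *ᵥ x)
        + y ⬝ᵥ ((g s)ᵀ * q s * g s) *ᵥ y) := by
    refine intervalIntegral.integral_nonneg hT fun s hs => ?_
    rw [quad_form_eq, quad_form_eq, quad_form_eq']
    exact key_ineq (hqpos s hs) (g s *ᵥ x) (g s *ᵥ y)
  rw [intervalIntegral.integral_add ((iF1.sub (iF2.const_mul 2))) iF3,
    intervalIntegral.integral_sub iF1 (iF2.const_mul 2),
    intervalIntegral.integral_const_mul] at hJ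
  rw [← quad_intervalIntegral x x _ iGQiG, ← hN] at hJ
  rw [← quad_intervalIntegral y x _ iGG, ← hΨ] at hJ
  rw [← quad_intervalIntegral y y _ iGQG, ← hΞ] at hJ
  have h3 : y ⬝ᵥ Ξ *ᵥ y = y ⬝ᵥ (Ψ *ᵥ x) := by
    have hXy : Ξ *ᵥ y = Ψ *ᵥ x := by
      rw [hy, Matrix.mulVec_mulVec, Matrix.mul_nonsing_inv Ξ hΞdet, Matrix.one_mulVec]
    rw [hXy]
  rw [h3] at hJ
  rw [Matrix.sub_mulVec, dotProduct_sub, hc]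
  linarith
end
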